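/- Fix λ > 0 and define ν(d) as in the hard core analysis (ν(d) = (d·x̃(d)-1)/(1+x̃(d)) where x̃(d) solves d·x = 1 + λ/(1+x)^d, for real d ≥ 1). Then the function H(x) = log(e^x · ν(e^x)) is concave on [0, ∞). -/

import Mathlib

open Real Set Filter Topology

noncomputable def Efun (θ : ℝ) : ℝ := if θ = 0 then 1 else (1 - Real.exp (-θ)) / θ

lemma Efun_id (θ : ℝ) : Real.exp (-θ) - 1 = -(θ * Efun θ) := by
  unfold Efun
  by_cases h : θ = 0
  · simp [h]
  · rw [if_neg h]; field_simp; ring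

lemma Efun_tendsto : Tendsto Efun (𝓝 0) (𝓝 1) := by
  have h1 : Tendsto (slope Real.exp 0) (𝓝[≠] (0:ℝ)) (𝓝 1) := by
    have := Real.hasDerivAt_exp 0
    rw [hasDerivAt_iff_tendsto_slope] at this
    simpa using this
  have hneg : Tendsto (fun θ : ℝ => -θ) (𝓝[≠] (0:ℝ)) (𝓝[≠] (0:ℝ)) := by
    apply tendsto_nhdsWithin_of_tendsto_nhds_of_eventually_within
    · simpa using ((continuous_neg.tendsto (0:ℝ))).mono_left nhdsWithin_le_nhds
    · filter_upwards [self_mem_nhdsWithin] with θ hθ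
      simpa using hθ
  have h2 : Tendsto Efun (𝓝[≠] (0:ℝ)) (𝓝 1) := by
    refine (h1.comp hneg).congr' ?_
    filter_upwards [self_mem_nhdsWithin] with θ hθ
    have hθ' : θ ≠ 0 := hθ
    simp only [Function.comp, slope_def_field, Efun, if_neg hθ', Real.exp_zero]
    rw [sub_zero]
    field_simp
    ring
  have : ContinuousWithinAt Efun {(0:ℝ)}ᶜ 0 := by
    have h0 : Efun 0 = 1 := by simp [Efun]
    rw [ContinuousWithinAt, h0]; exact h2
  have := continuousWithinAt_compl_self.mp this
  simpa [ContinuousAt, Efun] using this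

section B
variable {lam : ℝ} {xt : ℝ → ℝ}

lemma xt_anti (hlam : 0 < lam)
    (hxt : ∀ d ≥ (1 : ℝ), 0 < xt d ∧ d * xt d = 1 + lam / (1 + xt d) ^ d)
    {c d : ℝ} (hc : 1 ≤ c) (hcd : c < d) : xt d < xt c := by
  by_contra hcon
  push_neg at hcon
  have hd : (1:ℝ) ≤ d := le_trans hc hcd.le
  have hy : 0 < xt c := (hxt c hc).1
  have hx : 0 < xt d := (hxt d hd).1
  have h1 : c * xt c < d * xt d := by nlinarith
  have h2 : (1 + xt c) ^ c ≤ (1 + xt d) ^ d := by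
    calc (1 + xt c)^c ≤ (1 + xt d)^c :=
          Real.rpow_le_rpow (by linarith) (by linarith) (by linarith)
    _ ≤ (1 + xt d)^d := Real.rpow_le_rpow_of_exponent_le (by linarith) hcd.le
  have h3 : lam / (1 + xt d)^d ≤ lam / (1 + xt c)^c := by
    gcongr
  have := (hxt c hc).2
  have := (hxt d hd).2
  linarith

lemma F_cont (x : ℝ) (hx : 0 < x) :
    Continuous (fun d : ℝ => d * x - 1 - lam / (1 + x) ^ d) := by
  have h1x : (0:ℝ) < 1 + x := by linarith
  have hc : Continuous fun d : ℝ => (1 + x) ^ d := by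
    simp only [Real.rpow_def_of_pos h1x]
    exact Real.continuous_exp.comp (continuous_const.mul continuous_id)
  exact ((continuous_id.mul continuous_const).sub continuous_const).sub
    (continuous_const.div hc fun d => (Real.rpow_pos_of_pos h1x d).ne')

lemma F_mono (hlam : 0 < lam) {d : ℝ} (hd : 1 ≤ d) :
    StrictMonoOn (fun x : ℝ => d * x - 1 - lam / (1 + x) ^ d) (Ioi 0) := by
  intro a ha b hb hab
  simp only [mem_Ioi] at ha hb
  have h1 : d * a < d * b := by nlinarith
  have h2 : (1 + a) ^ d < (1 + b) ^ d :=
    Real.rpow_lt_rpow (by linarith) (by linarith) (by linarith)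
  have h3 : lam / (1 + b) ^ d < lam / (1 + a) ^ d := by
    gcongr
  simp only
  linarith

lemma xt_contOn (hlam : 0 < lam)
    (hxt : ∀ d ≥ (1 : ℝ), 0 < xt d ∧ d * xt d = 1 + lam / (1 + xt d) ^ d) :
    ContinuousOn xt (Ici 1) := by
  intro d₀ hd₀
  rw [mem_Ici] at hd₀
  have hx₀ : 0 < xt d₀ := (hxt d₀ hd₀).1
  rw [ContinuousWithinAt, Metric.tendsto_nhds]
  intro ε hε
  set x₀ := xt d₀ with hx₀def
  set ε' := min ε (x₀/2) with hε'def
  have hε'pos : 0 < ε' := lt_min hε (by linarith)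
  have hε'le : ε' ≤ ε := min_le_left _ _
  have hlow : 0 < x₀ - ε' := by
    have := min_le_right ε (x₀/2); linarith
  have hF0 : ∀ d ≥ (1:ℝ), d * xt d - 1 - lam / (1 + xt d) ^ d = 0 := by
    intro d hd
    have := (hxt d hd).2; linarith
  have hneg : d₀ * (x₀ - ε') - 1 - lam / (1 + (x₀ - ε')) ^ d₀ < 0 := by
    have := F_mono hlam hd₀ (a := x₀ - ε') (b := x₀) hlow (by simpa using hx₀) (by linarith)
    simp only at this
    have h0 := hF0 d₀ hd₀
    linarith
  have hpos : 0 < d₀ * (x₀ + ε') - 1 - lam / (1 + (x₀ + ε')) ^ d₀ := by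
    have := F_mono hlam hd₀ (a := x₀) (b := x₀ + ε') (by simpa using hx₀) (by simp; linarith) (by linarith)
    simp only at this
    have h0 := hF0 d₀ hd₀
    linarith
  have e1 : ∀ᶠ d in 𝓝 d₀, d * (x₀ - ε') - 1 - lam / (1 + (x₀ - ε')) ^ d < 0 :=
    ((F_cont (x₀ - ε') hlow).tendsto d₀).eventually_lt_const hneg
  have e2 : ∀ᶠ d in 𝓝 d₀, 0 < d * (x₀ + ε') - 1 - lam / (1 + (x₀ + ε')) ^ d :=
    ((F_cont (x₀ + ε') (by linarith)).tendsto d₀).eventually_const_lt hpos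
  filter_upwards [(nhdsWithin_le_nhds) e1, (nhdsWithin_le_nhds) e2,
      self_mem_nhdsWithin] with d h1 h2 hd
  rw [mem_Ici] at hd
  have hxd : 0 < xt d := (hxt d hd).1
  have h0 : d * xt d - 1 - lam / (1 + xt d) ^ d = 0 := hF0 d hd
  have hub : xt d < x₀ + ε' := by
    have := ((F_mono hlam hd).lt_iff_lt (mem_Ioi.mpr hxd) (mem_Ioi.mpr (by linarith : (0:ℝ) < x₀ + ε'))).mp
    apply this
    show d * xt d - 1 - lam / (1 + xt d) ^ d < _
    linarith
  have hlb : x₀ - ε' < xt d := by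
    have := ((F_mono hlam hd).lt_iff_lt (mem_Ioi.mpr hlow) (mem_Ioi.mpr hxd)).mp
    apply this
    show _ < d * xt d - 1 - lam / (1 + xt d) ^ d
    linarith
  rw [Real.dist_eq, abs_lt]
  constructor <;> linarith

end B

section C
variable {lam : ℝ} {xt : ℝ → ℝ}

lemma one_lt_dx (hlam : 0 < lam)
    (hxt : ∀ d ≥ (1 : ℝ), 0 < xt d ∧ d * xt d = 1 + lam / (1 + xt d) ^ d)
    {d : ℝ} (hd : 1 ≤ d) : 1 < d * xt d := by
  have h1 : (0:ℝ) < (1 + xt d) ^ d := Real.rpow_pos_of_pos (by linarith [(hxt d hd).1]) d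
  have h2 := (hxt d hd).2
  have h3 : 0 < lam / (1 + xt d) ^ d := div_pos hlam h1
  linarith

lemma dx_exp (hlam : 0 < lam)
    (hxt : ∀ d ≥ (1 : ℝ), 0 < xt d ∧ d * xt d = 1 + lam / (1 + xt d) ^ d)
    {d : ℝ} (hd : 1 ≤ d) :
    d * xt d - 1 = lam * Real.exp (-(d * Real.log (1 + xt d))) := by
  have hx : 0 < xt d := (hxt d hd).1
  have h1x : (0:ℝ) < 1 + xt d := by linarith
  have h2 := (hxt d hd).2
  have hr : (1 + xt d) ^ d = Real.exp (d * Real.log (1 + xt d)) := by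
    rw [Real.rpow_def_of_pos h1x]; ring_nf
  rw [hr] at h2
  rw [Real.exp_neg]
  rw [h2]
  field_simp
  ring

lemma xt_ne (hlam : 0 < lam)
    (hxt : ∀ d ≥ (1 : ℝ), 0 < xt d ∧ d * xt d = 1 + lam / (1 + xt d) ^ d)
    {d₀ d : ℝ} (hd₀ : 1 ≤ d₀) (hd : 1 ≤ d) (hne : d ≠ d₀) : xt d ≠ xt d₀ := by
  rcases hne.lt_or_gt with h | h
  · exact (xt_anti hlam hxt hd h).ne'
  · exact (xt_anti hlam hxt hd₀ h).ne

lemma xt_hasDeriv (hlam : 0 < lam)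
    (hxt : ∀ d ≥ (1 : ℝ), 0 < xt d ∧ d * xt d = 1 + lam / (1 + xt d) ^ d)
    {d₀ : ℝ} (hd₀ : 1 < d₀) :
    HasDerivAt xt
      (-((1 + xt d₀) * (xt d₀ + (d₀ * xt d₀ - 1) * Real.log (1 + xt d₀))) /
        (d₀ * xt d₀ * (1 + d₀))) d₀ := by
  have hd₀' : (1:ℝ) ≤ d₀ := hd₀.le
  set x₀ := xt d₀ with hx₀def
  set A₀ := Real.log (1 + x₀) with hA₀def
  set K := d₀ * x₀ - 1 with hKdef
  have hx₀ : 0 < x₀ := (hxt d₀ hd₀').1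
  have h1x₀ : (0:ℝ) < 1 + x₀ := by linarith
  have hK : 0 < K := by have := one_lt_dx hlam hxt hd₀'; rw [hKdef]; linarith
  set θ : ℝ → ℝ := fun d => d * Real.log (1 + xt d) - d₀ * A₀ with hθdef
  set G : ℝ → ℝ := fun d => slope (fun u => Real.log (1 + u)) x₀ (xt d) with hGdef
  set T : ℝ → ℝ := fun d =>
    -(x₀ + K * Efun (θ d) * A₀) / (d * (1 + K * Efun (θ d) * G d)) with hTdef
  -- continuity of xt at d₀
  have hcx : ContinuousAt xt d₀ :=
    (xt_contOn hlam hxt d₀ (mem_Ici.mpr hd₀')).continuousAt (Ici_mem_nhds hd₀)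
  have htendxt : Tendsto xt (𝓝[≠] d₀) (𝓝 x₀) := hcx.tendsto.mono_left nhdsWithin_le_nhds
  have hidt : Tendsto (fun d : ℝ => d) (𝓝[≠] d₀) (𝓝 d₀) :=
    tendsto_id.mono_left nhdsWithin_le_nhds
  have hlogt : Tendsto (fun d => Real.log (1 + xt d)) (𝓝[≠] d₀) (𝓝 A₀) :=
    ((Real.continuousAt_log h1x₀.ne').tendsto).comp (tendsto_const_nhds.add htendxt)
  have hθt : Tendsto θ (𝓝[≠] d₀) (𝓝 0) := by
    have := (hidt.mul hlogt).sub (tendsto_const_nhds (x := d₀ * A₀))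
    simpa using this
  have hEt : Tendsto (fun d => Efun (θ d)) (𝓝[≠] d₀) (𝓝 1) := Efun_tendsto.comp hθt
  -- xt eventually ≠ x₀
  have hne : ∀ᶠ d in 𝓝[≠] d₀, xt d ≠ x₀ ∧ 1 < d := by
    have h1 : ∀ᶠ d in 𝓝[≠] d₀, 1 < d :=
      (eventually_gt_nhds hd₀).filter_mono nhdsWithin_le_nhds
    filter_upwards [h1, self_mem_nhdsWithin] with d h1d hdne
    exact ⟨xt_ne hlam hxt hd₀' h1d.le hdne, h1d⟩
  have hGt : Tendsto G (𝓝[≠] d₀) (𝓝 (1 / (1 + x₀))) := by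
    have hlog' : HasDerivAt (fun u => Real.log (1 + u)) (1 / (1 + x₀)) x₀ := by
      have h := (Real.hasDerivAt_log h1x₀.ne').comp x₀ ((hasDerivAt_id x₀).const_add 1)
      simpa [one_div, Function.comp_def] using h
    rw [hasDerivAt_iff_tendsto_slope] at hlog'
    have hxtne : Tendsto xt (𝓝[≠] d₀) (𝓝[≠] x₀) := by
      apply tendsto_nhdsWithin_of_tendsto_nhds_of_eventually_within _ htendxt
      filter_upwards [hne] with d hd using hd.1
    exact hlog'.comp hxtne
  -- limit of T
  have hdenlim : Tendsto (fun d => d * (1 + K * Efun (θ d) * G d)) (𝓝[≠] d₀)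
      (𝓝 (d₀ * (1 + K * 1 * (1 / (1 + x₀))))) :=
    hidt.mul (tendsto_const_nhds.add ((tendsto_const_nhds.mul hEt).mul hGt))
  have hdenpos : 0 < d₀ * (1 + K * 1 * (1 / (1 + x₀))) := by
    have : 0 < K * (1 / (1 + x₀)) := mul_pos hK (by positivity)
    nlinarith
  have hTt : Tendsto T (𝓝[≠] d₀)
      (𝓝 (-(x₀ + K * 1 * A₀) / (d₀ * (1 + K * 1 * (1 / (1 + x₀)))))) := by
    apply Tendsto.div _ hdenlim hdenpos.ne'
    exact (tendsto_const_nhds.add ((tendsto_const_nhds.mul hEt).mul tendsto_const_nhds)).neg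
  -- the limit equals the claimed derivative
  have hLeq : -(x₀ + K * 1 * A₀) / (d₀ * (1 + K * 1 * (1 / (1 + x₀)))) =
      -((1 + x₀) * (x₀ + K * A₀)) / (d₀ * x₀ * (1 + d₀)) := by
    rw [div_eq_div_iff hdenpos.ne' (by positivity)]
    field_simp
    rw [hKdef]
    ring
  -- eventual equality of slope and T
  have hdenev : ∀ᶠ d in 𝓝[≠] d₀, 0 < d * (1 + K * Efun (θ d) * G d) :=
    hdenlim.eventually_const_lt hdenpos
  have heq : slope xt d₀ =ᶠ[𝓝[≠] d₀] T := by
    filter_upwards [hne, hdenev, self_mem_nhdsWithin] with d hd hden hdne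
    obtain ⟨hxne, h1d⟩ := hd
    have hdne' : d ≠ d₀ := hdne
    have hx : 0 < xt d := (hxt d h1d.le).1
    set x := xt d with hxdef
    set A := Real.log (1 + x) with hAdef
    set E := Efun (θ d) with hEdef
    -- main identity
    have i1 : d * x - 1 = lam * Real.exp (-(d * A)) := dx_exp hlam hxt h1d.le
    have i0 : d₀ * x₀ - 1 = lam * Real.exp (-(d₀ * A₀)) := dx_exp hlam hxt hd₀'
    have i2 : Real.exp (-(d * A)) = Real.exp (-(d₀ * A₀)) * Real.exp (-(θ d)) := by
      rw [← Real.exp_add]; congr 1; simp only [hθdef]; ring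
    have i3 : Real.exp (-(θ d)) - 1 = -(θ d * E) := Efun_id (θ d)
    have i4 : A - A₀ = G d * (x - x₀) := by
      have hsub : x - x₀ ≠ 0 := sub_ne_zero.mpr hxne
      simp only [hGdef, slope_def_field, hxdef, hAdef, hx₀def, hA₀def]
      field_simp
      exact (mul_div_cancel_right₀ _ hsub).symm
    have iθ : θ d = d * (A - A₀) + (d - d₀) * A₀ := by simp only [hθdef]; ring
    have main : d * (x - x₀) + (d - d₀) * x₀ =
        -(K * E * (d * (G d * (x - x₀)) + (d - d₀) * A₀)) := by
      have i1' := i1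
      rw [i2] at i1'
      have e1 : d * x - d₀ * x₀ = K * (Real.exp (-(θ d)) - 1) := by
        rw [hKdef]
        linear_combination i1' - i0 - (Real.exp (-(θ d)) - 1) * i0
      rw [i3, iθ, i4] at e1
      linear_combination e1
    rw [slope_def_field]
    rw [div_eq_div_iff (sub_ne_zero.mpr hdne') hden.ne']
    simp only [hEdef] at main ⊢
    linear_combination main
  rw [hasDerivAt_iff_tendsto_slope]
  have := hTt.congr' heq.symm
  rw [hLeq] at this
  exact this

end C

section D
variable {lam : ℝ} {xt : ℝ → ℝ}

lemma H_eq (hlam : 0 < lam)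
    (hxt : ∀ d ≥ (1 : ℝ), 0 < xt d ∧ d * xt d = 1 + lam / (1 + xt d) ^ d)
    (ν : ℝ → ℝ) (hν : ν = fun d => (d * xt d - 1) / (1 + xt d))
    (H : ℝ → ℝ) (hH : H = fun x => Real.log (Real.exp x * ν (Real.exp x)))
    {t : ℝ} (ht : 0 ≤ t) :
    H t = t + Real.log lam -
      (Real.exp t + 1) * Real.log (1 + xt (Real.exp t)) := by
  have hd : (1:ℝ) ≤ Real.exp t := Real.one_le_exp ht
  set d := Real.exp t with hddef
  have hx : 0 < xt d := (hxt d hd).1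
  have h1x : (0:ℝ) < 1 + xt d := by linarith
  have hdx : 1 < d * xt d := one_lt_dx hlam hxt hd
  have heq : d * xt d - 1 = lam / (1 + xt d) ^ d := by
    have := (hxt d hd).2; linarith
  have hνpos : 0 < ν d := by
    rw [hν]; exact div_pos (by linarith) h1x
  have hlogν : Real.log (ν d) = Real.log lam - d * Real.log (1 + xt d)
      - Real.log (1 + xt d) := by
    rw [hν]
    simp only
    rw [Real.log_div (by linarith) h1x.ne', heq,
      Real.log_div hlam.ne' (Real.rpow_pos_of_pos h1x d).ne',
      Real.log_rpow h1x]
  rw [hH]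
  simp only
  rw [Real.log_mul (Real.exp_pos t).ne' hνpos.ne', Real.log_exp, hlogν]
  ring

lemma H_hasDeriv (hlam : 0 < lam)
    (hxt : ∀ d ≥ (1 : ℝ), 0 < xt d ∧ d * xt d = 1 + lam / (1 + xt d) ^ d)
    (ν : ℝ → ℝ) (hν : ν = fun d => (d * xt d - 1) / (1 + xt d))
    (H : ℝ → ℝ) (hH : H = fun x => Real.log (Real.exp x * ν (Real.exp x)))
    {t : ℝ} (ht : 0 < t) :
    HasDerivAt H
      (2 - Real.log (1 + xt (Real.exp t)) / xt (Real.exp t)) t := by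
  have hd : (1:ℝ) < Real.exp t := by
    have := Real.exp_lt_exp (x := 0) (y := t)
    simpa using this.mpr ht
  set d := Real.exp t with hddef
  set x := xt d with hxdef
  set A := Real.log (1 + x) with hAdef
  set x' := -((1 + x) * (x + (d * x - 1) * A)) / (d * x * (1 + d)) with hx'def
  have hx : 0 < x := (hxt d hd.le).1
  have h1x : (0:ℝ) < 1 + x := by linarith
  have hdpos : (0:ℝ) < d := by linarith
  have h1 : HasDerivAt (fun s => xt (Real.exp s)) (x' * d) t :=
    (xt_hasDeriv hlam hxt hd).comp t (Real.hasDerivAt_exp t)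
  have h2 : HasDerivAt (fun s => Real.log (1 + xt (Real.exp s)))
      ((1 + x)⁻¹ * (x' * d)) t := by
    have := (Real.hasDerivAt_log h1x.ne').comp t (h1.const_add 1)
    simpa [Function.comp_def] using this
  have h3 : HasDerivAt (fun s => (Real.exp s + 1) * Real.log (1 + xt (Real.exp s)))
      (d * A + (d + 1) * ((1 + x)⁻¹ * (x' * d))) t := by
    have := ((Real.hasDerivAt_exp t).add_const 1).mul h2
    simpa [Pi.mul_def] using this
  have h4 : HasDerivAt (fun s => s + Real.log lam -
      (Real.exp s + 1) * Real.log (1 + xt (Real.exp s)))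
      (1 - (d * A + (d + 1) * ((1 + x)⁻¹ * (x' * d)))) t :=
    ((hasDerivAt_id t).add_const _).sub h3
  have hcongr : H =ᶠ[𝓝 t] fun s => s + Real.log lam -
      (Real.exp s + 1) * Real.log (1 + xt (Real.exp s)) := by
    filter_upwards [eventually_gt_nhds ht] with s hs
    exact H_eq hlam hxt ν hν H hH hs.le
  have h5 := h4.congr_of_eventuallyEq hcongr
  refine h5.congr_deriv ?_; symm
  rw [hx'def]
  have hne : d * x * (1 + d) ≠ 0 := by positivity
  field_simp
  ring
end D

lemma phi_anti : AntitoneOn (fun u : ℝ => Real.log (1 + u) / u) (Ioi 0) := by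
  have hderiv : ∀ u ∈ Ioi (0:ℝ), HasDerivAt (fun u : ℝ => Real.log (1 + u) / u)
      (((1 + u)⁻¹ * u - Real.log (1 + u) * 1) / u ^ 2) u := by
    intro u hu
    rw [mem_Ioi] at hu
    have h1u : (0:ℝ) < 1 + u := by linarith
    have hnum : HasDerivAt (fun u : ℝ => Real.log (1 + u)) ((1 + u)⁻¹) u := by
      have := (Real.hasDerivAt_log h1u.ne').comp u ((hasDerivAt_id u).const_add 1)
      simpa [Function.comp_def] using this
    exact hnum.div (hasDerivAt_id u) hu.ne'
  apply antitoneOn_of_deriv_nonpos (convex_Ioi 0)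
  · intro u hu
    exact ((hderiv u hu).continuousAt).continuousWithinAt
  · intro u hu
    rw [interior_Ioi] at hu
    exact ((hderiv u hu).differentiableAt).differentiableWithinAt
  · intro u hu
    rw [interior_Ioi] at hu
    rw [(hderiv u hu).deriv]
    rw [mem_Ioi] at hu
    have h1u : (0:ℝ) < 1 + u := by linarith
    have hlog : 1 - (1 + u)⁻¹ ≤ Real.log (1 + u) := by
      have h := Real.log_le_sub_one_of_pos (x := (1 + u)⁻¹) (by positivity)
      rw [Real.log_inv] at h
      linarith
    apply div_nonpos_of_nonpos_of_nonneg _ (by positivity)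
    have : (1 + u)⁻¹ * u = 1 - (1 + u)⁻¹ := by
      field_simp
      ring
    nlinarith [hlog, this]

theorem H_concave (lam : ℝ) (hlam : 0 < lam) (xt : ℝ → ℝ)
    (hxt : ∀ d ≥ (1 : ℝ), 0 < xt d ∧ d * xt d = 1 + lam / (1 + xt d) ^ d)
    (ν : ℝ → ℝ) (hν : ν = fun d => (d * xt d - 1) / (1 + xt d))
    (H : ℝ → ℝ) (hH : H = fun x => Real.log (Real.exp x * ν (Real.exp x))) :
    ConcaveOn ℝ (Set.Ici 0) H := by
  apply AntitoneOn.concaveOn_of_deriv (convex_Ici 0)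
  · -- continuity of H on [0, ∞)
    have hxte : ContinuousOn (fun t : ℝ => xt (Real.exp t)) (Ici 0) := by
      apply (xt_contOn hlam hxt).comp Real.continuous_exp.continuousOn
      intro t ht
      exact mem_Ici.mpr (Real.one_le_exp (mem_Ici.mp ht))
    have hg : ContinuousOn (fun t : ℝ => t + Real.log lam -
        (Real.exp t + 1) * Real.log (1 + xt (Real.exp t))) (Ici 0) := by
      apply ContinuousOn.sub
      · exact continuous_id.continuousOn.add continuousOn_const
      · apply ContinuousOn.mul
        · exact Real.continuous_exp.continuousOn.add continuousOn_const
        · apply ContinuousOn.log (continuousOn_const.add hxte)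
          intro t ht
          have := (hxt _ (Real.one_le_exp (mem_Ici.mp ht))).1
          intro hc
          have hc : 1 + xt (Real.exp t) = 0 := hc
          linarith
    apply hg.congr
    intro t ht
    exact H_eq hlam hxt ν hν H hH (mem_Ici.mp ht)
  · rw [interior_Ici]
    intro t ht
    exact (H_hasDeriv hlam hxt ν hν H hH
      (mem_Ioi.mp ht)).differentiableAt.differentiableWithinAt
  · rw [interior_Ici]
    intro a ha b hb hab
    rw [(H_hasDeriv hlam hxt ν hν H hH (mem_Ioi.mp ha)).deriv,
        (H_hasDeriv hlam hxt ν hν H hH (mem_Ioi.mp hb)).deriv]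
    rw [mem_Ioi] at ha hb
    have hea : (1:ℝ) < Real.exp a := by
      have := Real.exp_lt_exp (x := (0:ℝ)) (y := a)
      simpa using this.mpr ha
    have hxa : 0 < xt (Real.exp a) := (hxt _ hea.le).1
    have heb : (1:ℝ) ≤ Real.exp b := hea.le.trans (Real.exp_le_exp.mpr hab)
    have hxb : 0 < xt (Real.exp b) := (hxt _ heb).1
    have hxble : xt (Real.exp b) ≤ xt (Real.exp a) := by
      rcases eq_or_lt_of_le hab with h | h
      · rw [h]
      · exact (xt_anti hlam hxt hea.le (Real.exp_lt_exp.mpr h)).le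
    have hphi := phi_anti (mem_Ioi.mpr hxb) (mem_Ioi.mpr hxa) hxble
    linarith
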